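/- Let M be a matroid on a finite ground set E, let r = rk(E), and define the Whitney numbers of the first kind w_k(M) by χ_M(T) = Σ_{k=0}^{r} (−1)^k w_k(M) T^{r−k}. Then w_k(M) ≥ 0 for all 0 ≤ k ≤ r. -/

import Mathlib

open Classical

noncomputable section

/-- The rank of a subset `A` in a matroid `M`: the size of a maximal independent
subset of `A`. -/
def Matroid.mrank {α : Type*} (M : Matroid α) (A : Set α) : ℕ :=
  sSup (Set.ncard '' {I : Set α | M.Indep I ∧ I ⊆ A})

/-- The characteristic polynomial of a matroid `M` on a finite ground set:
`χ_M(T) = Σ_{A ⊆ E} (−1)^{|A|} T^{rk(E) − rk(A)}`. -/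
def Matroid.charPoly {α : Type*} [Fintype α] (M : Matroid α) : Polynomial ℤ :=
  ∑ A ∈ (Set.toFinite M.E).toFinset.powerset,
    (-1) ^ A.card * Polynomial.X ^ (M.mrank M.E - M.mrank ↑A)

namespace WhitneyAux

variable {α : Type*} [Fintype α] {M : Matroid α} {A B I : Set α} {e : α}

lemma mrank_bdd (M : Matroid α) (A : Set α) :
    BddAbove (Set.ncard '' {I : Set α | M.Indep I ∧ I ⊆ A}) := by
  refine ⟨Fintype.card α, ?_⟩
  rintro n ⟨I, -, rfl⟩
  calc I.ncard ≤ (Set.univ : Set α).ncard :=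
        Set.ncard_le_ncard (Set.subset_univ I) Set.finite_univ
    _ = Fintype.card α := by rw [Set.ncard_univ, Nat.card_eq_fintype_card]

lemma mrank_set_nonempty (M : Matroid α) (A : Set α) :
    (Set.ncard '' {I : Set α | M.Indep I ∧ I ⊆ A}).Nonempty :=
  ⟨0, ∅, ⟨M.empty_indep, Set.empty_subset _⟩, by simp⟩

lemma ncard_le_mrank (hI : M.Indep I) (hIA : I ⊆ A) : I.ncard ≤ M.mrank A :=
  le_csSup (mrank_bdd M A) ⟨I, ⟨hI, hIA⟩, rfl⟩

lemma mrank_mono (M : Matroid α) (h : A ⊆ B) : M.mrank A ≤ M.mrank B := by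
  refine csSup_le (mrank_set_nonempty M A) ?_
  rintro n ⟨I, ⟨hI, hIA⟩, rfl⟩
  exact ncard_le_mrank hI (hIA.trans h)

lemma exists_mrank_basis (M : Matroid α) (A : Set α) :
    ∃ I, M.Indep I ∧ I ⊆ A ∧ I.ncard = M.mrank A := by
  have := Nat.sSup_mem (mrank_set_nonempty M A) (mrank_bdd M A)
  obtain ⟨I, ⟨h1, h2⟩, h3⟩ := this
  exact ⟨I, h1, h2, h3⟩

lemma mrank_indep (hI : M.Indep A) : M.mrank A = A.ncard := by
  refine le_antisymm (csSup_le (mrank_set_nonempty M A) ?_) (ncard_le_mrank hI subset_rfl)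
  rintro n ⟨I, ⟨-, hIA⟩, rfl⟩
  exact Set.ncard_le_ncard hIA (Set.toFinite A)

lemma mrank_insert_closure (hA : A ⊆ M.E) (he : e ∈ M.closure A) :
    M.mrank (insert e A) = M.mrank A := by
  refine le_antisymm ?_ (mrank_mono M (Set.subset_insert e A))
  obtain ⟨I, hI, hIA, hcard⟩ := exists_mrank_basis M (insert e A)
  rw [← hcard]
  by_cases heI : e ∈ I
  · have hI' : M.Indep (I \ {e}) := hI.subset Set.diff_subset
    have hI'A : I \ {e} ⊆ A := by
      intro x hx
      rcases hIA hx.1 with h | h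
      · exact absurd h hx.2
      · exact h
    obtain ⟨J, hJ, hIJ⟩ := hI'.subset_isBasis_of_subset hI'A hA
    by_cases hle : I.ncard ≤ J.ncard
    · exact hle.trans (ncard_le_mrank hJ.indep hJ.subset)
    · exfalso
      have hIc : (I \ {e}).ncard + 1 = I.ncard :=
        Set.ncard_diff_singleton_add_one heI (Set.toFinite I)
      have hJeq : I \ {e} = J :=
        Set.eq_of_subset_of_ncard_le hIJ (by omega) (Set.toFinite J)
      have hclA : A ⊆ M.closure (I \ {e}) := by rw [hJeq]; exact hJ.subset_closure
      have hecl : e ∈ M.closure (I \ {e}) :=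
        Matroid.closure_subset_closure_of_subset_closure hclA he
      have heI' : e ∉ I \ {e} := fun h => h.2 rfl
      have : M.Indep (insert e (I \ {e})) := by
        rwa [Set.insert_diff_singleton, Set.insert_eq_of_mem heI]
      rw [hI'.insert_indep_iff_of_notMem heI'] at this
      exact this.2 hecl
  · have : I ⊆ A := fun x hx => (hIA hx).resolve_left (fun h => heI (h ▸ hx))
    exact ncard_le_mrank hI this

section Order

variable [LinearOrder α]

/-- The set of elements that "complete a broken circuit" of `A`. -/
def BCset (M : Matroid α) (A : Finset α) : Set α :=
  {e | e ∈ M.closure {a : α | a ∈ A ∧ a < e}}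

/-- Toggle an element in a finset. -/
def toggle (A : Finset α) (e : α) : Finset α :=
  if e ∈ A then A.erase e else insert e A

lemma mem_toggle_iff {A : Finset α} {e a : α} (hae : a ≠ e) :
    a ∈ toggle A e ↔ a ∈ A := by
  unfold toggle
  split <;> simp [hae]

lemma e_mem_toggle_iff {A : Finset α} {e : α} : e ∈ toggle A e ↔ e ∉ A := by
  unfold toggle
  split <;> simp_all

lemma toggle_toggle (A : Finset α) (e : α) : toggle (toggle A e) e = A := by
  unfold toggle
  by_cases h : e ∈ A <;> simp [h, Finset.insert_erase, Finset.erase_insert]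

lemma lt_set_toggle {A : Finset α} {e f : α} (hf : f ≤ e) :
    {a : α | a ∈ toggle A e ∧ a < f} = {a : α | a ∈ A ∧ a < f} := by
  ext a
  simp only [Set.mem_setOf_eq, and_congr_left_iff]
  intro ha
  exact mem_toggle_iff (ne_of_lt (lt_of_lt_of_le ha hf))

lemma mem_BCset_toggle_iff {A : Finset α} {e f : α} (hf : f ≤ e) :
    f ∈ BCset M (toggle A e) ↔ f ∈ BCset M A := by
  unfold BCset
  rw [Set.mem_setOf_eq, Set.mem_setOf_eq, lt_set_toggle hf]

/-- The minimum element of `BCset M A`. -/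
def firstBC (M : Matroid α) (A : Finset α) (h : (BCset M A).Nonempty) : α :=
  (Set.toFinite (BCset M A)).toFinset.min' ((Set.Finite.toFinset_nonempty _).mpr h)

lemma firstBC_mem (M : Matroid α) (A : Finset α) (h : (BCset M A).Nonempty) :
    firstBC M A h ∈ BCset M A := by
  have := (Set.toFinite (BCset M A)).toFinset.min'_mem ((Set.Finite.toFinset_nonempty _).mpr h)
  exact (Set.Finite.mem_toFinset _).mp this

lemma firstBC_le (M : Matroid α) (A : Finset α) (h : (BCset M A).Nonempty)
    {f : α} (hf : f ∈ BCset M A) : firstBC M A h ≤ f :=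
  (Set.toFinite (BCset M A)).toFinset.min'_le f ((Set.Finite.mem_toFinset _).mpr hf)

lemma BCset_toggle_nonempty (M : Matroid α) (A : Finset α) (h : (BCset M A).Nonempty) :
    (BCset M (toggle A (firstBC M A h))).Nonempty :=
  ⟨firstBC M A h, (mem_BCset_toggle_iff le_rfl).mpr (firstBC_mem M A h)⟩

lemma firstBC_toggle (M : Matroid α) (A : Finset α) (h : (BCset M A).Nonempty) :
    firstBC M (toggle A (firstBC M A h)) (BCset_toggle_nonempty M A h) = firstBC M A h := by
  set e := firstBC M A h with he
  set h' := BCset_toggle_nonempty M A h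
  refine le_antisymm (firstBC_le M _ h' ((mem_BCset_toggle_iff le_rfl).mpr (firstBC_mem M A h))) ?_
  by_contra hlt
  push_neg at hlt
  have hm := firstBC_mem M _ h'
  have : firstBC M (toggle A e) h' ∈ BCset M A :=
    (mem_BCset_toggle_iff hlt.le).mp hm
  exact absurd (firstBC_le M A h this) (not_le.mpr hlt)

lemma toggle_invol (M : Matroid α) (A : Finset α) (h : (BCset M A).Nonempty)
    (h' : (BCset M (toggle A (firstBC M A h))).Nonempty) :
    toggle (toggle A (firstBC M A h)) (firstBC M (toggle A (firstBC M A h)) h') = A := by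
  have heq : firstBC M (toggle A (firstBC M A h)) h' = firstBC M A h := firstBC_toggle M A h
  rw [heq]
  exact toggle_toggle A _

lemma mrank_toggle (M : Matroid α) (A : Finset α) (hA : ↑A ⊆ M.E)
    (h : (BCset M A).Nonempty) :
    M.mrank ↑(toggle A (firstBC M A h)) = M.mrank ↑A := by
  set e := firstBC M A h with hedef
  have hecl : e ∈ M.closure {a : α | a ∈ A ∧ a < e} := firstBC_mem M A h
  by_cases heA : e ∈ A
  · have hsub : {a : α | a ∈ A ∧ a < e} ⊆ (↑(A.erase e) : Set α) := by
      intro a ha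
      simp only [Finset.coe_erase, Set.mem_diff, Set.mem_singleton_iff]
      exact ⟨ha.1, ne_of_lt ha.2⟩
    have hecl' : e ∈ M.closure ↑(A.erase e) := M.closure_subset_closure hsub hecl
    have hsubE : (↑(A.erase e) : Set α) ⊆ M.E := fun x hx => hA (Finset.erase_subset e A hx)
    have hins : (↑A : Set α) = insert e ↑(A.erase e) := by
      rw [Finset.coe_erase, Set.insert_diff_singleton,
        Set.insert_eq_of_mem (Finset.mem_coe.mpr heA)]
    have := mrank_insert_closure hsubE hecl'
    rw [show toggle A e = A.erase e by simp [toggle, heA], hins, this]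
  · have hsub : {a : α | a ∈ A ∧ a < e} ⊆ (↑A : Set α) := fun a ha => ha.1
    have hecl' : e ∈ M.closure ↑A := M.closure_subset_closure hsub hecl
    have := mrank_insert_closure hA hecl'
    rw [show toggle A e = insert e A by simp [toggle, heA], Finset.coe_insert, this]

lemma toggle_subset {A : Finset α} (hA : ↑A ⊆ M.E) (h : (BCset M A).Nonempty) :
    ↑(toggle A (firstBC M A h)) ⊆ M.E := by
  set e := firstBC M A h with hedef
  have heE : e ∈ M.E := Matroid.mem_ground_of_mem_closure (firstBC_mem M A h)
  intro x hx
  by_cases hxe : x = e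
  · exact hxe ▸ heE
  · exact hA ((mem_toggle_iff hxe).mp hx)

lemma sign_toggle (A : Finset α) (e : α) :
    ((-1 : ℤ)) ^ (toggle A e).card = -(-1 : ℤ) ^ A.card := by
  by_cases h : e ∈ A
  · have : (A.erase e).card + 1 = A.card := Finset.card_erase_add_one h
    rw [show toggle A e = A.erase e by simp [toggle, h], ← this, pow_succ]
    ring
  · rw [show toggle A e = insert e A by simp [toggle, h],
      Finset.card_insert_of_notMem h, pow_succ]
    ring

lemma indep_of_BCset_empty :
    ∀ A : Finset α, ↑A ⊆ M.E → (∀ e, e ∉ M.closure {a : α | a ∈ A ∧ a < e}) →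
      M.Indep (↑A : Set α) := by
  intro A
  induction A using Finset.strongInduction with
  | _ A ih =>
    intro hA h
    rcases A.eq_empty_or_nonempty with rfl | hne
    · simpa using M.empty_indep
    · set m := A.max' hne with hm
      have hmA : m ∈ A := A.max'_mem hne
      have hsubE : (↑(A.erase m) : Set α) ⊆ M.E := fun x hx => hA (Finset.erase_subset m A hx)
      have hIndep' : M.Indep (↑(A.erase m) : Set α) := by
        refine ih _ (Finset.erase_ssubset hmA) hsubE (fun e hce => h e ?_)
        refine M.closure_subset_closure ?_ hce
        intro a ha
        exact ⟨Finset.erase_subset m A ha.1, ha.2⟩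
      have hset : {a : α | a ∈ A ∧ a < m} = (↑(A.erase m) : Set α) := by
        ext a
        simp only [Set.mem_setOf_eq, Finset.coe_erase, Set.mem_diff, Finset.mem_coe,
          Set.mem_singleton_iff]
        constructor
        · rintro ⟨h1, h2⟩; exact ⟨h1, ne_of_lt h2⟩
        · rintro ⟨h1, h2⟩; exact ⟨h1, lt_of_le_of_ne (A.le_max' a h1) h2⟩
      have hmcl : m ∉ M.closure (↑(A.erase m) : Set α) := by rw [← hset]; exact h m
      have hmm : m ∉ (↑(A.erase m) : Set α) := by simp
      have : M.Indep (insert m (↑(A.erase m) : Set α)) :=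
        (hIndep'.insert_indep_iff_of_notMem hmm).mpr ⟨hA hmA, hmcl⟩
      rwa [show insert m (↑(A.erase m) : Set α) = ↑A by
        rw [← Finset.coe_insert, Finset.insert_erase hmA]] at this

end Order

end WhitneyAux

/-- The Whitney numbers of the first kind `w_k(M)`, defined by
`χ_M(T) = Σ_{k=0}^r (−1)^k w_k(M) T^{r−k}` with `r = rk(E)`, are nonnegative. -/
theorem whitney_first_kind_nonneg {α : Type*} [Fintype α] (M : Matroid α)
    (r : ℕ) (hr : r = M.mrank M.E) (w : ℕ → ℤ)
    (hw : M.charPoly = ∑ k ∈ Finset.range (r + 1),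
        (-1) ^ k * Polynomial.C (w k) * Polynomial.X ^ (r - k)) :
    ∀ k ≤ r, 0 ≤ w k := by
  letI : LinearOrder α := LinearOrder.lift' (Fintype.equivFin α) (Fintype.equivFin α).injective
  intro k hk
  have hC : ∀ n : ℕ, ((-1 : Polynomial ℤ)) ^ n = Polynomial.C ((-1 : ℤ) ^ n) := fun n => by
    rw [map_pow, map_neg, map_one]
  set E : Finset α := (Set.toFinite M.E).toFinset with hE
  -- the coefficient of X^(r-k) in the RHS of hw is (-1)^k * w k
  have hRHS : ((∑ j ∈ Finset.range (r + 1),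
      (-1) ^ j * Polynomial.C (w j) * Polynomial.X ^ (r - j)) : Polynomial ℤ).coeff (r - k)
      = (-1) ^ k * w k := by
    rw [Polynomial.finset_sum_coeff]
    rw [Finset.sum_eq_single k]
    · rw [hC, ← Polynomial.C_mul, Polynomial.coeff_C_mul, Polynomial.coeff_X_pow]
      simp
    · intro j hj hjk
      have hj' : j ≤ r := by have := Finset.mem_range.mp hj; omega
      have : (r - k) ≠ (r - j) := by omega
      rw [hC, ← Polynomial.C_mul, Polynomial.coeff_C_mul, Polynomial.coeff_X_pow, if_neg this,
        mul_zero]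
    · intro hk'
      exact absurd (Finset.mem_range.mpr (by omega)) hk'
  -- the coefficient of X^(r-k) in charPoly
  have hsubE : ∀ A ∈ E.powerset, (↑A : Set α) ⊆ M.E := by
    intro A hA
    intro x hx
    have := Finset.mem_powerset.mp hA hx
    rw [hE] at this
    exact (Set.Finite.mem_toFinset _).mp this
  have hrle : ∀ A ∈ E.powerset, M.mrank ↑A ≤ r := by
    intro A hA
    rw [hr]
    exact WhitneyAux.mrank_mono M (hsubE A hA)
  have hLHS : M.charPoly.coeff (r - k)
      = ∑ A ∈ E.powerset, (if M.mrank ↑A = k then ((-1 : ℤ)) ^ A.card else 0) := by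
    rw [Matroid.charPoly, Polynomial.finset_sum_coeff]
    refine Finset.sum_congr rfl ?_
    intro A hA
    rw [hC, Polynomial.coeff_C_mul, Polynomial.coeff_X_pow, ← hr]
    by_cases hmr : M.mrank ↑A = k
    · rw [if_pos (by rw [hmr]), if_pos hmr, mul_one]
    · have := hrle A hA
      rw [if_neg (by omega), if_neg hmr, mul_zero]
  -- rewrite as a sum over the filtered set
  set s : Finset (Finset α) := E.powerset.filter (fun A => M.mrank ↑A = k) with hs
  have hLHS2 : M.charPoly.coeff (r - k) = ∑ A ∈ s, ((-1 : ℤ)) ^ A.card := by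
    rw [hLHS, hs, Finset.sum_filter]
  -- split into moving (BCset nonempty) and fixed parts
  set t : Finset (Finset α) := s.filter (fun A => (WhitneyAux.BCset M A).Nonempty) with ht
  set t' : Finset (Finset α) := s.filter (fun A => ¬(WhitneyAux.BCset M A).Nonempty) with ht'
  have hsplit : ∑ A ∈ s, ((-1 : ℤ)) ^ A.card
      = ∑ A ∈ t, ((-1 : ℤ)) ^ A.card + ∑ A ∈ t', ((-1 : ℤ)) ^ A.card :=
    (Finset.sum_filter_add_sum_filter_not s _ _).symm
  -- the moving part sums to zero via the involution
  have hmove : ∑ A ∈ t, ((-1 : ℤ)) ^ A.card = 0 := by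
    refine Finset.sum_involution
      (fun A hA => WhitneyAux.toggle A (WhitneyAux.firstBC M A
        (by exact (Finset.mem_filter.mp hA).2))) ?_ ?_ ?_ ?_
    · intro A hA
      beta_reduce
      rw [WhitneyAux.sign_toggle]
      ring
    · intro A hA _
      beta_reduce
      set e := WhitneyAux.firstBC M A (Finset.mem_filter.mp hA).2 with he
      intro hcontra
      have h1 : e ∈ WhitneyAux.toggle A e ↔ e ∉ A := WhitneyAux.e_mem_toggle_iff
      rw [hcontra] at h1
      tauto
    · intro A hA
      beta_reduce
      obtain ⟨hAs, hAne⟩ := Finset.mem_filter.mp hA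
      obtain ⟨hApow, hAmr⟩ := Finset.mem_filter.mp hAs
      refine Finset.mem_filter.mpr ⟨Finset.mem_filter.mpr ⟨?_, ?_⟩, ?_⟩
      · refine Finset.mem_powerset.mpr ?_
        intro x hx
        have := WhitneyAux.toggle_subset (hsubE A hApow) hAne hx
        rw [hE]
        exact (Set.Finite.mem_toFinset _).mpr this
      · rw [WhitneyAux.mrank_toggle M A (hsubE A hApow) hAne]
        exact hAmr
      · exact WhitneyAux.BCset_toggle_nonempty M A hAne
    · intro A hA
      beta_reduce
      exact WhitneyAux.toggle_invol M A (Finset.mem_filter.mp hA).2 _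
  -- the fixed part: each term is (-1)^k
  have hfix : ∑ A ∈ t', ((-1 : ℤ)) ^ A.card = t'.card * ((-1 : ℤ)) ^ k := by
    rw [Finset.sum_congr rfl (fun A hA => ?_), Finset.sum_const, nsmul_eq_mul]
    obtain ⟨hAs, hAe⟩ := Finset.mem_filter.mp hA
    obtain ⟨hApow, hAmr⟩ := Finset.mem_filter.mp hAs
    have hempty : ∀ e, e ∉ M.closure {a : α | a ∈ A ∧ a < e} := by
      intro e hce
      exact hAe ⟨e, hce⟩
    have hind : M.Indep (↑A : Set α) :=
      WhitneyAux.indep_of_BCset_empty A (hsubE A hApow) hempty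
    have : M.mrank ↑A = A.card := by
      rw [WhitneyAux.mrank_indep hind, Set.ncard_coe_finset]
    rw [← hAmr, this]
  -- put it together
  have hfinal : ((-1 : ℤ)) ^ k * w k = t'.card * ((-1 : ℤ)) ^ k := by
    rw [← hRHS, ← hw, hLHS2, hsplit, hmove, hfix, zero_add]
  have hne : ((-1 : ℤ)) ^ k ≠ 0 := pow_ne_zero k (by norm_num)
  have : w k = (t'.card : ℤ) := by
    have := hfinal
    rw [mul_comm (t'.card : ℤ) _] at this
    exact mul_left_cancel₀ hne this
  rw [this]
  exact Int.natCast_nonneg _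

end
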